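/- Let X be a real Hilbert space, M : X ⊸ X a set-valued map such that ⟨u - v, x - y⟩ ≥ m‖x - y‖² for all u ∈ M(x), v ∈ M(y) with m > 0, and H : X → X satisfying ⟨H(x) - H(y), x - y⟩ ≥ r‖x - y‖² with r > 0, and suppose (H + ρM)(X) = X for all ρ > 0. If (u₀, x₀) ∈ X × X satisfies ⟨u₀ - v, x₀ - y⟩ ≥ 0 for all (y, v) with v ∈ M(y), then u₀ ∈ M(x₀); i.e., M is maximal among monotone-type relations. -/

import Mathlib

/-- (Hilbert-space Proposition 3.6.) If M is m-strongly monotone (m > 0),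
H is r-strongly monotone (r > 0) and H + ρM is surjective for all ρ > 0, then any pair
(u₀, x₀) monotonically related to the graph of M lies in the graph of M. -/
theorem stmt19 {X : Type*} [NormedAddCommGroup X] [InnerProductSpace ℝ X]
    (M : X → Set X) (H : X → X) (m r : ℝ) (hm : 0 < m) (hr : 0 < r)
    (hM : ∀ x y u v, u ∈ M x → v ∈ M y → (inner ℝ (u - v) (x - y) : ℝ) ≥ m * ‖x - y‖ ^ 2)
    (hH : ∀ x y : X, (inner ℝ (H x - H y) (x - y) : ℝ) ≥ r * ‖x - y‖ ^ 2)
    (hsurj : ∀ ρ : ℝ, 0 < ρ → ∀ y : X, ∃ x, ∃ z ∈ M x, y = H x + ρ • z)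
    (u₀ x₀ : X)
    (h₀ : ∀ y v : X, v ∈ M y → (inner ℝ (u₀ - v) (x₀ - y) : ℝ) ≥ 0) :
    u₀ ∈ M x₀ := by
  obtain ⟨x₁, u₁, hu₁, heq⟩ := hsurj 1 one_pos (H x₀ + u₀)
  rw [one_smul] at heq
  have h1 : (inner ℝ (u₀ - u₁) (x₀ - x₁) : ℝ) ≥ 0 := h₀ x₁ u₁ hu₁
  have h2 : u₀ - u₁ = H x₁ - H x₀ := by
    have : H x₀ + u₀ - (H x₁ + u₁) = 0 := by rw [← heq]; abel
    linear_combination (norm := abel_nf) this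
  have h3 : (inner ℝ (H x₀ - H x₁) (x₀ - x₁) : ℝ) ≥ r * ‖x₀ - x₁‖ ^ 2 := hH x₀ x₁
  have h4 : (inner ℝ (H x₀ - H x₁) (x₀ - x₁) : ℝ) = -(inner ℝ (u₀ - u₁) (x₀ - x₁) : ℝ) := by
    rw [h2]; rw [← inner_neg_left]; congr 1; abel
  have hx : x₀ = x₁ := by
    have hn : r * ‖x₀ - x₁‖ ^ 2 ≤ 0 := by linarith
    by_contra h
    have hp : 0 < ‖x₀ - x₁‖ := norm_pos_iff.mpr (sub_ne_zero.mpr h)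
    nlinarith [mul_pos hr (pow_pos hp 2)]
  have hu : u₀ = u₁ := by
    have := h2
    rw [hx] at this
    simpa [sub_eq_zero] using this
  rw [hx, hu]; exact hu₁
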